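/- Let 𝒜 be the set of all triangles in the plane, i.e., all 3-element subsets of ℝ². Let V ∈ 𝒜 and let P ∈ ℝ² be a point such that f(P) = P for every similarity f of ℝ² with f(V) = V. Then there exists a triangle center, i.e., a map 𝔷 : 𝒜 → ℝ² satisfying 𝔷(f(W)) = f(𝔷(W)) for every similarity f of ℝ² and every W ∈ 𝒜 (where f(W) denotes the image set {f(x) : x ∈ W}), such that 𝔷(V) = P. -/

import Mathlib

/-- A similarity of the plane: a bijection `f : ℝ² → ℝ²` such that for some `r > 0`,
`dist (f x) (f y) = r * dist x y` for all `x, y`. -/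
def IsSimilarity (f : EuclideanSpace ℝ (Fin 2) → EuclideanSpace ℝ (Fin 2)) : Prop :=
  Function.Bijective f ∧
    ∃ r : ℝ, 0 < r ∧ ∀ x y : EuclideanSpace ℝ (Fin 2), dist (f x) (f y) = r * dist x y

/-- A triangle center: a map `𝔷` from sets of points of the plane to the plane which,
on triangles (3-element subsets of ℝ²), commutes with every similarity acting
pointwise. -/
def IsTriangleCenter
    (Z : Set (EuclideanSpace ℝ (Fin 2)) → EuclideanSpace ℝ (Fin 2)) : Prop :=
  ∀ f, IsSimilarity f → ∀ W : Set (EuclideanSpace ℝ (Fin 2)), W.ncard = 3 →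
    Z (f '' W) = f (Z W)

namespace Stmt9Aux

abbrev E := EuclideanSpace ℝ (Fin 2)

lemma comp_similarity {f g : E → E} (hf : IsSimilarity f) (hg : IsSimilarity g) :
    IsSimilarity (g ∘ f) := by
  obtain ⟨hfb, r, hr, hfd⟩ := hf
  obtain ⟨hgb, s, hs, hgd⟩ := hg
  exact ⟨hgb.comp hfb, s * r, by positivity, fun x y => by
    simp [Function.comp, hgd, hfd, mul_assoc]⟩

lemma inv_similarity {f : E → E} (hf : IsSimilarity f) :
    ∃ g : E → E, IsSimilarity g ∧ (∀ x, g (f x) = x) ∧ ∀ x, f (g x) = x := by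
  obtain ⟨hfb, r, hr, hfd⟩ := hf
  let e := Equiv.ofBijective f hfb
  refine ⟨e.symm, ⟨e.symm.bijective, r⁻¹, by positivity, fun x y => ?_⟩,
    fun x => e.symm_apply_apply x, fun x => e.apply_symm_apply x⟩
  have h := hfd (e.symm x) (e.symm y)
  have hx : f (e.symm x) = x := e.apply_symm_apply x
  have hy : f (e.symm y) = y := e.apply_symm_apply y
  rw [hx, hy] at h
  field_simp [h]
  rw [h]; ring

lemma key {V : Set E} {P : E} (hP : ∀ f, IsSimilarity f → f '' V = V → f P = P)
    {f₁ f₂ : E → E} (h₁ : IsSimilarity f₁) (h₂ : IsSimilarity f₂)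
    (him : f₁ '' V = f₂ '' V) : f₁ P = f₂ P := by
  obtain ⟨g, hg, hgl, hgr⟩ := inv_similarity h₂
  have himg : (g ∘ f₁) '' V = V := by
    rw [Set.image_comp, him]
    ext x
    constructor
    · rintro ⟨y, ⟨z, hz, rfl⟩, rfl⟩; rwa [hgl z]
    · intro hx; exact ⟨f₂ x, ⟨x, hx, rfl⟩, hgl x⟩
  have h := hP (g ∘ f₁) (comp_similarity h₁ hg) himg
  have := congrArg f₂ h
  simpa [Function.comp, hgr (f₁ P)] using this

/-- Every similarity of the plane is affine. -/
lemma similarity_affine {f : E → E} (hf : IsSimilarity f) :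
    ∃ (L : E →ₗ[ℝ] E) (b : E), ∀ x, f x = L x + b := by
  obtain ⟨hfb, r, hr, hfd⟩ := hf
  let e : E ≃ E := Equiv.ofBijective f hfb
  have hiso : Isometry (fun x : E => r⁻¹ • f x) := by
    refine Isometry.of_dist_eq fun x y => ?_
    rw [dist_smul₀, hfd, Real.norm_eq_abs, abs_inv, abs_of_pos hr]
    field_simp
  let h : E ≃ᵢ E :=
    ⟨{ toFun := fun x => r⁻¹ • f x
       invFun := fun y => e.symm (r • y)
       left_inv := fun x => by
         simp only [smul_smul, mul_inv_cancel₀ hr.ne', one_smul]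
         exact e.symm_apply_apply x
       right_inv := fun y => by
         have : f (e.symm (r • y)) = r • y := e.apply_symm_apply (r • y)
         simp only [this, smul_smul, inv_mul_cancel₀ hr.ne', one_smul] }, hiso⟩
  let L' := h.toRealLinearIsometryEquiv
  have hL' : ∀ x, (L' : E → E) x = h x - h 0 := fun x =>
    h.toRealLinearIsometryEquiv_apply x
  refine ⟨r • (L'.toLinearEquiv : E →ₗ[ℝ] E), r • ((r:ℝ)⁻¹ • f 0), fun x => ?_⟩
  have hx : (L' : E → E) x = r⁻¹ • f x - r⁻¹ • f 0 := hL' x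
  have : (L'.toLinearEquiv : E →ₗ[ℝ] E) x = r⁻¹ • f x - r⁻¹ • f 0 := hx
  simp only [LinearMap.smul_apply, this, smul_sub, smul_smul,
    mul_inv_cancel₀ hr.ne', one_smul]
  abel

open Classical in
noncomputable def ctr (W : Set E) : E :=
  if h : W.Finite then (3 : ℝ)⁻¹ • ∑ x ∈ h.toFinset, x else 0

lemma ctr_image {g : E → E} (hg : IsSimilarity g) {W : Set E} (hW : W.ncard = 3) :
    ctr (g '' W) = g (ctr W) := by
  obtain ⟨L, b, hgL⟩ := similarity_affine hg
  have hWf : W.Finite := Set.finite_of_ncard_ne_zero (by omega)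
  have hWf' : (g '' W).Finite := hWf.image g
  have hcard : hWf.toFinset.card = 3 := by
    rwa [Set.ncard_eq_toFinset_card W hWf] at hW
  classical
  have himg : hWf'.toFinset = hWf.toFinset.image g :=
    Set.Finite.toFinset_image g hWf hWf'
  have hsum : ∑ x ∈ hWf'.toFinset, x = ∑ x ∈ hWf.toFinset, g x := by
    rw [himg, Finset.sum_image]
    intro x _ y _ hxy
    exact hg.1.1 hxy
  rw [ctr, ctr, dif_pos hWf', dif_pos hWf, hsum]
  have hkey : ∑ x ∈ hWf.toFinset, g x = L (∑ x ∈ hWf.toFinset, x) + (3 : ℕ) • b := by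
    rw [map_sum, ← hcard, ← Finset.sum_const, ← Finset.sum_add_distrib]
    exact Finset.sum_congr rfl fun x _ => hgL x
  rw [hkey, hgL, smul_add, map_smul]
  congr 1
  rw [← Nat.cast_smul_eq_nsmul ℝ, smul_smul]
  norm_num

end Stmt9Aux

/-- For every triangle `V` in the plane and every point `P` fixed by all the
similarities fixing `V` (pointwise action on sets), there exists a triangle center
`𝔷` with `𝔷 V = P`. -/
theorem stmt_9 (V : Set (EuclideanSpace ℝ (Fin 2))) (hV : V.ncard = 3)
    (P : EuclideanSpace ℝ (Fin 2))
    (hP : ∀ f, IsSimilarity f → f '' V = V → f P = P) :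
    ∃ Z, IsTriangleCenter Z ∧ Z V = P := by
  classical
  refine ⟨fun W => if h : ∃ f, IsSimilarity f ∧ f '' V = W then h.choose P
      else Stmt9Aux.ctr W, ?_, ?_⟩
  · intro g hg W hW
    by_cases h : ∃ f, IsSimilarity f ∧ f '' V = W
    · have h' : ∃ f, IsSimilarity f ∧ f '' V = g '' W :=
        ⟨g ∘ h.choose, Stmt9Aux.comp_similarity h.choose_spec.1 hg,
          by rw [Set.image_comp, h.choose_spec.2]⟩
      dsimp only
      rw [dif_pos h, dif_pos h']
      have := Stmt9Aux.key hP h'.choose_spec.1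
        (Stmt9Aux.comp_similarity h.choose_spec.1 hg)
        (by rw [h'.choose_spec.2, Set.image_comp, h.choose_spec.2])
      simpa using this
    · have h' : ¬ ∃ f, IsSimilarity f ∧ f '' V = g '' W := by
        rintro ⟨f, hf, hfi⟩
        obtain ⟨g', hg', hgl, hgr⟩ := Stmt9Aux.inv_similarity hg
        refine h ⟨g' ∘ f, Stmt9Aux.comp_similarity hf hg', ?_⟩
        rw [Set.image_comp, hfi]
        ext x
        simp only [Set.mem_image]
        constructor
        · rintro ⟨y, ⟨z, hz, rfl⟩, rfl⟩; rwa [hgl z]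
        · intro hx; exact ⟨g x, ⟨x, hx, rfl⟩, hgl x⟩
      dsimp only
      rw [dif_neg h', dif_neg h]
      exact Stmt9Aux.ctr_image hg hW
  · have h : ∃ f, IsSimilarity f ∧ f '' V = V :=
      ⟨id, ⟨Function.bijective_id, 1, one_pos, by simp⟩, by simp⟩
    dsimp only
    rw [dif_pos h]
    exact hP h.choose h.choose_spec.1 h.choose_spec.2
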